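/- arXiv:1301.6433 — 5 statements merged into one kernel-verified Lean document; each statement's English description precedes it below -/
import Mathlib

section
/- Let m, k ≥ 1, let d_1 ≥ d_2 ≥ ... ≥ d_k ≥ 0 be real delays, and let w_1, ..., w_k be natural numbers, not all zero, with m* = max_j w_j. If A is an m × k binary matrix such that the number of 1-entries in column j equals w_j for every j ∈ {1,...,k}, then D_T(A) ≥ D_T(A*), where A* is the m* × k matrix with a*_{i,j} = 1 iff i ≤ w_j. -/
/-- The delay of row `i` of a binary matrix `A`: the maximum of `d j` over the
columns `j` where `A i j = 1`, with the empty maximum taken to be `0`. -/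
def rowDelay {m k : ℕ} (d : Fin k → ℝ) (A : Fin m → Fin k → Bool) (i : Fin m) : ℝ :=
  (Finset.univ.filter (fun j => A i j = true)).fold max 0 d

/-- The total delay of a binary matrix `A`: the sum of the row delays. -/
def totalDelay {m k : ℕ} (d : Fin k → ℝ) (A : Fin m → Fin k → Bool) : ℝ :=
  ∑ i, rowDelay d A i

/-- The weight of column `j` of a binary matrix `A`: the number of its 1-entries. -/
def colWeight {m k : ℕ} (A : Fin m → Fin k → Bool) (j : Fin k) : ℕ :=
  (Finset.univ.filter (fun i => A i j = true)).card

/-- Extension of `d` to `ℕ` by zero. -/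
noncomputable def Dfun {k : ℕ} (d : Fin k → ℝ) : ℕ → ℝ :=
  fun n => if h : n < k then d ⟨n, h⟩ else 0

/-- Successive differences of `Dfun`. -/
noncomputable def cfun {k : ℕ} (d : Fin k → ℝ) : ℕ → ℝ :=
  fun n => Dfun d n - Dfun d (n + 1)

lemma cfun_nonneg {k : ℕ} (d : Fin k → ℝ) (hd0 : ∀ j, 0 ≤ d j) (hdanti : Antitone d)
    (n : ℕ) : 0 ≤ cfun d n := by
  unfold cfun Dfun
  by_cases h1 : n + 1 < k
  · have h0 : n < k := Nat.lt_of_succ_lt h1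
    simp only [h0, h1, dif_pos, sub_nonneg]
    exact hdanti (by simp [Fin.le_def])
  · by_cases h0 : n < k
    · simp only [h0, h1, dif_pos, dif_neg, not_false_iff, sub_zero]
      exact hd0 _
    · simp [h0, h1]

lemma cfun_telescope {k : ℕ} (d : Fin k → ℝ) (n : ℕ) (hn : n < k) :
    ∑ l ∈ Finset.Ico n k, cfun d l = d ⟨n, hn⟩ := by
  unfold cfun
  rw [Finset.sum_Ico_eq_sub _ (le_of_lt hn), Finset.sum_range_sub' (Dfun d),
    Finset.sum_range_sub' (Dfun d)]
  have hk0 : Dfun d k = 0 := by simp [Dfun]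
  have hn0 : Dfun d n = d ⟨n, hn⟩ := by simp [Dfun, hn]
  rw [hk0, hn0]; ring

lemma rowDelay_eq_sum {m k : ℕ} (d : Fin k → ℝ) (hd0 : ∀ j, 0 ≤ d j) (hdanti : Antitone d)
    (A : Fin m → Fin k → Bool) (i : Fin m) :
    rowDelay d A i
      = ∑ l ∈ Finset.range k,
          cfun d l * (if ∃ j : Fin k, A i j = true ∧ j.val ≤ l then 1 else 0) := by
  classical
  set S : Finset (Fin k) := Finset.univ.filter (fun j => A i j = true) with hS
  rcases S.eq_empty_or_nonempty with hE | hNE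
  · have h1 : rowDelay d A i = 0 := by
      unfold rowDelay
      rw [← hS, hE, Finset.fold_empty]
    rw [h1]
    refine (Finset.sum_eq_zero fun l _ => ?_).symm
    have : ¬ ∃ j : Fin k, A i j = true ∧ j.val ≤ l := by
      rintro ⟨j, hj, -⟩
      have : j ∈ S := by simp [hS, hj]
      simp [hE] at this
    simp [this]
  · set j0 := S.min' hNE with hj0
    have hj0S : j0 ∈ S := S.min'_mem hNE
    have hLHS : rowDelay d A i = d j0 := by
      unfold rowDelay
      rw [← hS]
      apply le_antisymm
      · rw [Finset.fold_max_le]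
        exact ⟨hd0 _, fun x hx => hdanti (S.min'_le x hx)⟩
      · rw [Finset.le_fold_max]
        exact Or.inr ⟨j0, hj0S, le_rfl⟩
    rw [hLHS]
    have hcond : ∀ l, (∃ j : Fin k, A i j = true ∧ j.val ≤ l) ↔ j0.val ≤ l := by
      intro l
      constructor
      · rintro ⟨j, hj, hjl⟩
        have hjS : j ∈ S := by simp [hS, hj]
        exact le_trans (S.min'_le j hjS) hjl
      · intro h
        have : A i j0 = true := by simpa [hS] using hj0S
        exact ⟨j0, this, h⟩
    calc d j0 = ∑ l ∈ Finset.Ico j0.val k, cfun d l := (cfun_telescope d j0.val j0.isLt).symm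
      _ = ∑ l ∈ (Finset.range k).filter (fun l => j0.val ≤ l), cfun d l := by
          congr 1
          ext l
          simp [Finset.mem_Ico, Finset.mem_filter, Finset.mem_range, and_comm]
      _ = ∑ l ∈ Finset.range k,
            cfun d l * (if ∃ j : Fin k, A i j = true ∧ j.val ≤ l then 1 else 0) := by
          rw [Finset.sum_filter]
          refine Finset.sum_congr rfl fun l _ => ?_
          by_cases h : j0.val ≤ l <;> simp [h, hcond l]

/-- Number of rows having a one in some column `≤ l`. -/
def Nrows {m k : ℕ} (A : Fin m → Fin k → Bool) (l : ℕ) : ℕ :=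
  (Finset.univ.filter (fun i : Fin m => ∃ j : Fin k, A i j = true ∧ j.val ≤ l)).card

lemma totalDelay_eq_sum {m k : ℕ} (d : Fin k → ℝ) (hd0 : ∀ j, 0 ≤ d j) (hdanti : Antitone d)
    (A : Fin m → Fin k → Bool) :
    totalDelay d A = ∑ l ∈ Finset.range k, cfun d l * (Nrows A l : ℝ) := by
  classical
  unfold totalDelay
  rw [Finset.sum_congr rfl fun i _ => rowDelay_eq_sum d hd0 hdanti A i, Finset.sum_comm]
  refine Finset.sum_congr rfl fun l _ => ?_
  rw [← Finset.mul_sum]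
  congr 1
  rw [Finset.sum_boole]
  simp [Nrows]

lemma weight_le_Nrows {m k : ℕ} (A : Fin m → Fin k → Bool) (j : Fin k) (l : ℕ)
    (hjl : j.val ≤ l) : colWeight A j ≤ Nrows A l := by
  classical
  apply Finset.card_le_card
  intro i hi
  simp only [Finset.mem_filter, Finset.mem_univ, true_and] at hi ⊢
  exact ⟨j, hi, hjl⟩

/-- if every column of the binary matrix `A` has exactly `w j` ones,
then the total delay of `A` is at least that of the canonical matrix `A*`
(with `m* = max_j w_j` rows, whose column `j` consists of `w j` ones on top). -/
theorem stmt0 (m k : ℕ) (hm : 1 ≤ m) (hk : 1 ≤ k)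
    (d : Fin k → ℝ) (hd0 : ∀ j, 0 ≤ d j) (hdanti : Antitone d)
    (w : Fin k → ℕ) (hw : ∃ j, w j ≠ 0)
    (A : Fin m → Fin k → Bool)
    (hA : ∀ j, colWeight A j = w j) :
    totalDelay d (fun (i : Fin (Finset.univ.sup w)) (j : Fin k) => decide (i.val < w j))
      ≤ totalDelay d A := by
  classical
  set mstar := Finset.univ.sup w with hms
  set Astar : Fin mstar → Fin k → Bool := fun i j => decide (i.val < w j) with hAstar
  rw [totalDelay_eq_sum d hd0 hdanti Astar, totalDelay_eq_sum d hd0 hdanti A]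
  apply Finset.sum_le_sum
  intro l _
  have hc := cfun_nonneg d hd0 hdanti l
  apply mul_le_mul_of_nonneg_left _ hc
  -- it suffices to show Nrows Astar l ≤ Nrows A l
  have key : Nrows Astar l ≤ Nrows A l := by
    -- let M = sup of w over columns j with j.val ≤ l
    set M : ℕ := (Finset.univ.filter (fun j : Fin k => j.val ≤ l)).sup w with hM
    have hMle : M ≤ mstar := Finset.sup_mono (Finset.filter_subset _ _)
    -- Nrows Astar l = M
    have hstar : Nrows Astar l = M := by
      unfold Nrows
      have hset : (Finset.univ.filter
            (fun i : Fin mstar => ∃ j : Fin k, Astar i j = true ∧ j.val ≤ l))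
          = (Finset.range M).attachFin
              (fun x hx => lt_of_lt_of_le (Finset.mem_range.mp hx) hMle) := by
        ext i
        simp only [Finset.mem_filter, Finset.mem_univ, true_and, Finset.mem_attachFin,
          Finset.mem_range, hAstar, decide_eq_true_eq]
        constructor
        · rintro ⟨j, hij, hjl⟩
          exact lt_of_lt_of_le hij (Finset.le_sup (by simp [hjl]))
        · intro hiM
          rw [hM, Finset.lt_sup_iff] at hiM
          obtain ⟨j, hj, hij⟩ := hiM
          simp only [Finset.mem_filter, Finset.mem_univ, true_and] at hj
          exact ⟨j, hij, hj⟩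
      rw [hset, Finset.card_attachFin, Finset.card_range]
    rw [hstar, hM]
    apply Finset.sup_le
    intro j hj
    simp only [Finset.mem_filter, Finset.mem_univ, true_and] at hj
    rw [← hA j]
    exact weight_le_Nrows A j l hj
  exact_mod_cast key
end

section
/- Let k ≥ 1, let d_1 ≥ d_2 ≥ ... ≥ d_k ≥ 0 be real delays, and let w_1, ..., w_k be natural numbers, not all zero, with m* = max_j w_j. Then D_T(A*) = Σ_{j=1}^k d_j · max{0, w_j − max{w_{j'} : 0 ≤ j' < j}}, where by convention w_0 = 0. -/
lemma card_filter_interval (m a b : ℕ) (hb : b ≤ m) :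
    (Finset.univ.filter fun i : Fin m => a ≤ i.val ∧ i.val < b).card = b - a := by
  have h : (Finset.univ.filter fun i : Fin m => a ≤ i.val ∧ i.val < b).card
      = (Finset.Ico a b).card := by
    apply Finset.card_bij (fun i _ => i.val)
    · intro i hi
      simp only [Finset.mem_filter] at hi
      simp [Finset.mem_Ico, hi.2.1, hi.2.2]
    · intro i _ i' _ h
      exact Fin.val_injective h
    · intro x hx
      simp only [Finset.mem_Ico] at hx
      exact ⟨⟨x, lt_of_lt_of_le hx.2 hb⟩, by simp [hx.1, hx.2], rfl⟩
  rw [h, Nat.card_Ico]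

set_option maxHeartbeats 1000000 in
/-- the total delay of the canonical matrix `A*` equals
`∑ j, d j * max{0, w j - max{w j' : j' < j}}` (with the empty max taken as `0`,
i.e. the convention `w 0 = 0`); the truncated natural subtraction realises the
outer `max{0, ·}`. -/
theorem stmt1 (k : ℕ) (hk : 1 ≤ k)
    (d : Fin k → ℝ) (hd0 : ∀ j, 0 ≤ d j) (hdanti : Antitone d)
    (w : Fin k → ℕ) (hw : ∃ j, w j ≠ 0) :
    totalDelay d (fun (i : Fin (Finset.univ.sup w)) (j : Fin k) => decide (i.val < w j))
      = ∑ j : Fin k,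
          d j * ((w j - (Finset.univ.filter (fun j' => j' < j)).sup w : ℕ) : ℝ) := by
  classical
  set m := Finset.univ.sup w with hm
  set M : Fin k → ℕ := fun j => (Finset.univ.filter (fun j' => j' < j)).sup w with hM
  have hne : ∀ i : Fin m, (Finset.univ.filter (fun j => i.val < w j)).Nonempty := by
    intro i
    have hi : (i : ℕ) < Finset.univ.sup w := i.isLt
    rw [Finset.lt_sup_iff] at hi
    obtain ⟨j, _, hj⟩ := hi
    exact ⟨j, Finset.mem_filter.mpr ⟨Finset.mem_univ _, hj⟩⟩
  set f : Fin m → Fin k := fun i => (Finset.univ.filter (fun j => i.val < w j)).min' (hne i)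
    with hf
  have hfmem : ∀ i : Fin m, (i : ℕ) < w (f i) := by
    intro i
    have := (Finset.univ.filter (fun j => i.val < w j)).min'_mem (hne i)
    exact (Finset.mem_filter.mp this).2
  have hfle : ∀ (i : Fin m) (j : Fin k), (i : ℕ) < w j → f i ≤ j := by
    intro i j hj
    exact Finset.min'_le _ j (Finset.mem_filter.mpr ⟨Finset.mem_univ j, hj⟩)
  -- row delay equals d (f i)
  have hrow : ∀ i : Fin m,
      rowDelay d (fun (i : Fin m) (j : Fin k) => decide (i.val < w j)) i = d (f i) := by
    intro i
    unfold rowDelay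
    have hfilter : (Finset.univ.filter fun j => (decide ((i : ℕ) < w j)) = true)
        = Finset.univ.filter fun j => (i : ℕ) < w j := by
      simp
    rw [hfilter]
    apply le_antisymm
    · rw [Finset.fold_max_le]
      refine ⟨hd0 _, ?_⟩
      intro j hj
      have hj' := (Finset.mem_filter.mp hj).2
      exact hdanti (hfle i j hj')
    · rw [Finset.le_fold_max]
      exact Or.inr ⟨f i, Finset.mem_filter.mpr ⟨Finset.mem_univ _, hfmem i⟩, le_rfl⟩
  -- fiber characterization
  have hfiber : ∀ (i : Fin m) (j : Fin k), f i = j ↔ (M j ≤ (i : ℕ) ∧ (i : ℕ) < w j) := by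
    intro i j
    constructor
    · rintro rfl
      refine ⟨?_, hfmem i⟩
      by_contra h
      push_neg at h
      rw [hM, Finset.lt_sup_iff] at h
      obtain ⟨j', hj', hlt⟩ := h
      have hj'lt : j' < f i := (Finset.mem_filter.mp hj').2
      exact absurd (hfle i j' hlt) (not_le.mpr hj'lt)
    · rintro ⟨h1, h2⟩
      have hle : f i ≤ j := hfle i j h2
      rcases lt_or_eq_of_le hle with hlt | heq
      · exfalso
        have : w (f i) ≤ M j :=
          Finset.le_sup (Finset.mem_filter.mpr ⟨Finset.mem_univ _, hlt⟩)
        exact absurd (hfmem i) (not_lt.mpr (this.trans h1))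
      · exact heq
  -- fiber cardinality
  have hcard : ∀ j : Fin k,
      (Finset.univ.filter fun i : Fin m => f i = j).card = w j - M j := by
    intro j
    have hwm : w j ≤ m := Finset.le_sup (Finset.mem_univ j)
    rw [← card_filter_interval m (M j) (w j) hwm]
    congr 1
    apply Finset.filter_congr
    intro i _
    simp [hfiber i j]
  calc totalDelay d (fun (i : Fin m) (j : Fin k) => decide (i.val < w j))
      = ∑ i : Fin m, d (f i) := Finset.sum_congr rfl (fun i _ => hrow i)
    _ = ∑ j : Fin k, ∑ i ∈ Finset.univ.filter (fun i => f i = j), d (f i) :=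
        (Finset.sum_fiberwise Finset.univ f (fun i => d (f i))).symm
    _ = ∑ j : Fin k, d j * ((w j - M j : ℕ) : ℝ) := by
        apply Finset.sum_congr rfl
        intro j _
        rw [Finset.sum_congr rfl (fun i hi => by
          rw [(Finset.mem_filter.mp hi).2]), Finset.sum_const, hcard j,
          nsmul_eq_mul, mul_comm]
end

section
/- Let m, k ≥ 1, let d_1 ≥ d_2 ≥ ... ≥ d_k ≥ 0 be real delays, and let w_1, ..., w_k be natural numbers, not all zero, with m* = max_j w_j. If A is an m × k binary matrix such that the number of 1-entries in column j is at least w_j for every j ∈ {1,...,k}, then D_T(A) ≥ D_T(A*), where A* is the m* × k matrix with a*_{i,j} = 1 iff i ≤ w_j. Consequently, A* achieves the minimum total delay among all binary assignment matrices (of any number of rows) whose j-th column has at least w_j ones for all j. -/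
/-- Extension of `d` to `ℕ` by zero. -/
def Dext {k : ℕ} (d : Fin k → ℝ) (n : ℕ) : ℝ :=
  if h : n < k then d ⟨n, h⟩ else 0

lemma Dext_nonneg {k : ℕ} (d : Fin k → ℝ) (hd0 : ∀ j, 0 ≤ d j) (n : ℕ) :
    0 ≤ Dext d n := by
  unfold Dext; split <;> simp [hd0]

lemma Dext_anti {k : ℕ} (d : Fin k → ℝ) (hd0 : ∀ j, 0 ≤ d j) (hdanti : Antitone d)
    (n : ℕ) : Dext d (n + 1) ≤ Dext d n := by
  unfold Dext
  split
  · rename_i h1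
    have h2 : n < k := Nat.lt_of_succ_lt h1
    rw [dif_pos h2]
    exact hdanti (by simp [Fin.le_def])
  · split
    · exact hd0 _
    · exact le_refl 0

/-- Number of rows of `A` whose support meets `{0, …, j'}`. -/
def Ncount {m k : ℕ} (A : Fin m → Fin k → Bool) (j' : Fin k) : ℕ :=
  (Finset.univ.filter (fun i => ∃ j ≤ j', A i j = true)).card

lemma card_val_lt (n M : ℕ) (h : M ≤ n) :
    (Finset.univ.filter (fun i : Fin n => i.val < M)).card = M := by
  rw [← Finset.card_range M]
  refine Finset.card_bij (fun i _ => i.val) ?_ ?_ ?_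
  · intro a ha; simp only [Finset.mem_filter, Finset.mem_univ, true_and] at ha
    simpa using ha
  · intro a _ b _ hab; exact Fin.ext hab
  · intro b hb; simp only [Finset.mem_range] at hb
    exact ⟨⟨b, lt_of_lt_of_le hb h⟩, by simp [hb], rfl⟩

lemma telescope {k : ℕ} (d : Fin k → ℝ) (j0 : ℕ) (h : j0 < k) :
    ∑ n ∈ Finset.Ico j0 k, (Dext d n - Dext d (n + 1)) = d ⟨j0, h⟩ := by
  rw [Finset.sum_Ico_eq_sub _ (le_of_lt h), Finset.sum_range_sub' (Dext d),
    Finset.sum_range_sub' (Dext d)]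
  have h1 : Dext d k = 0 := by simp [Dext]
  have h2 : Dext d j0 = d ⟨j0, h⟩ := by simp [Dext, h]
  rw [h1, h2]; ring

lemma rowDelay_eq {m k : ℕ} (d : Fin k → ℝ) (hd0 : ∀ j, 0 ≤ d j) (hdanti : Antitone d)
    (A : Fin m → Fin k → Bool) (i : Fin m) :
    rowDelay d A i =
      ∑ j' : Fin k, (if ∃ j ≤ j', A i j = true then Dext d j'.val - Dext d (j'.val + 1) else 0) := by
  set S := Finset.univ.filter (fun j => A i j = true) with hS
  by_cases hne : S.Nonempty
  · set j0 := S.min' hne with hj0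
    have hmem : A i j0 = true := (Finset.mem_filter.mp (S.min'_mem hne)).2
    have h1 : rowDelay d A i = d j0 := by
      apply le_antisymm
      · rw [rowDelay, ← hS, Finset.fold_max_le]
        refine ⟨hd0 j0, fun x hx => hdanti (S.min'_le x hx)⟩
      · rw [rowDelay, ← hS, Finset.le_fold_max]
        exact Or.inr ⟨j0, S.min'_mem hne, le_rfl⟩
    have h2 : ∀ j' : Fin k, (∃ j ≤ j', A i j = true) ↔ j0 ≤ j' := by
      intro j'; constructor
      · rintro ⟨j, hj, hAj⟩
        exact le_trans (S.min'_le j (by simp [hS, hAj])) hj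
      · intro hle; exact ⟨j0, hle, hmem⟩
    rw [h1]
    calc d j0
        = ∑ n ∈ Finset.Ico j0.val k, (Dext d n - Dext d (n + 1)) := by
          rw [telescope d j0.val j0.isLt]
      _ = ∑ n ∈ Finset.range k,
            (if j0.val ≤ n then Dext d n - Dext d (n + 1) else 0) := by
          have hico : Finset.Ico j0.val k = (Finset.range k).filter (fun n => j0.val ≤ n) := by
            ext n
            simp [Finset.mem_Ico, Finset.mem_range, and_comm]
          rw [hico, Finset.sum_filter]
      _ = ∑ j' : Fin k,
            (if j0.val ≤ j'.val then Dext d j'.val - Dext d (j'.val + 1) else 0) := by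
          rw [Finset.sum_range fun n => if j0.val ≤ n then Dext d n - Dext d (n + 1) else 0]
      _ = _ := by
          apply Finset.sum_congr rfl
          intro j' _
          by_cases hc : j0.val ≤ j'.val
          · rw [if_pos hc, if_pos ((h2 j').mpr (Fin.le_def.mpr hc))]
          · rw [if_neg hc, if_neg (fun hx => hc (Fin.le_def.mp ((h2 j').mp hx)))]
  · have hempty : S = ∅ := Finset.not_nonempty_iff_eq_empty.mp hne
    have h1 : rowDelay d A i = 0 := by
      rw [rowDelay, ← hS, hempty]; rfl
    rw [h1]
    symm
    apply Finset.sum_eq_zero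
    intro j' _
    rw [if_neg]
    rintro ⟨j, _, hAj⟩
    have : j ∈ S := by simp [hS, hAj]
    rw [hempty] at this
    exact absurd this (Finset.notMem_empty j)

lemma totalDelay_eq {m k : ℕ} (d : Fin k → ℝ) (hd0 : ∀ j, 0 ≤ d j) (hdanti : Antitone d)
    (A : Fin m → Fin k → Bool) :
    totalDelay d A =
      ∑ j' : Fin k, (Ncount A j' : ℝ) * (Dext d j'.val - Dext d (j'.val + 1)) := by
  rw [totalDelay]
  rw [Finset.sum_congr rfl (fun i _ => rowDelay_eq d hd0 hdanti A i)]
  rw [Finset.sum_comm]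
  apply Finset.sum_congr rfl
  intro j' _
  rw [← Finset.sum_filter, Finset.sum_const, Ncount, nsmul_eq_mul]

/-- if every column `j` of the binary matrix `A` has at least `w j`
ones, then the total delay of `A` is at least that of the canonical matrix `A*`;
consequently (since `A*` itself has at least `w j` ones in each column, and `m`
and `A` are universally quantified), `A*` achieves the minimum total delay among
all admissible assignment matrices with any number of rows. -/
theorem stmt2 (m k : ℕ) (hm : 1 ≤ m) (hk : 1 ≤ k)
    (d : Fin k → ℝ) (hd0 : ∀ j, 0 ≤ d j) (hdanti : Antitone d)
    (w : Fin k → ℕ) (hw : ∃ j, w j ≠ 0)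
    (A : Fin m → Fin k → Bool)
    (hA : ∀ j, w j ≤ colWeight A j) :
    (∀ j, w j ≤
        colWeight (fun (i : Fin (Finset.univ.sup w)) (j : Fin k) => decide (i.val < w j)) j)
    ∧ totalDelay d (fun (i : Fin (Finset.univ.sup w)) (j : Fin k) => decide (i.val < w j))
        ≤ totalDelay d A := by
  set mstar := Finset.univ.sup w with hmstar
  set Astar : Fin mstar → Fin k → Bool := fun i j => decide (i.val < w j) with hAstar
  have hwle : ∀ j, w j ≤ mstar := fun j => Finset.le_sup (Finset.mem_univ j)
  have hcol : ∀ j, colWeight Astar j = w j := by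
    intro j
    rw [colWeight]
    have : (Finset.univ.filter (fun i : Fin mstar => Astar i j = true))
        = Finset.univ.filter (fun i : Fin mstar => i.val < w j) := by
      ext i; simp [hAstar]
    rw [this, card_val_lt _ _ (hwle j)]
  constructor
  · intro j; rw [hcol j]
  · rw [totalDelay_eq d hd0 hdanti A, totalDelay_eq d hd0 hdanti Astar]
    apply Finset.sum_le_sum
    intro j' _
    have hE : 0 ≤ Dext d j'.val - Dext d (j'.val + 1) :=
      sub_nonneg.mpr (Dext_anti d hd0 hdanti j'.val)
    apply mul_le_mul_of_nonneg_right _ hE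
    norm_cast
    -- N_{A*} j' ≤ N_A j'
    obtain ⟨js, hjs_mem, hjs_max⟩ :=
      Finset.exists_max_image (Finset.univ.filter (· ≤ j')) w
        ⟨j', by simp⟩
    simp only [Finset.mem_filter, Finset.mem_univ, true_and] at hjs_mem
    have hstar : Ncount Astar j' = w js := by
      rw [Ncount]
      have : (Finset.univ.filter (fun i : Fin mstar => ∃ j ≤ j', Astar i j = true))
          = Finset.univ.filter (fun i : Fin mstar => i.val < w js) := by
        ext i
        simp only [Finset.mem_filter, Finset.mem_univ, true_and, hAstar,
          decide_eq_true_eq]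
        constructor
        · rintro ⟨j, hj, hlt⟩
          exact lt_of_lt_of_le hlt (hjs_max j (by simp [hj]))
        · intro hlt; exact ⟨js, hjs_mem, hlt⟩
      rw [this, card_val_lt _ _ (hwle js)]
    rw [hstar]
    calc w js ≤ colWeight A js := hA js
      _ ≤ Ncount A j' := by
          apply Finset.card_le_card
          intro i hi
          simp only [Finset.mem_filter, Finset.mem_univ, true_and] at hi ⊢
          exact ⟨js, hjs_mem, hi⟩
end

section
/- Let m, k ≥ 1 and let d_1 ≥ d_2 ≥ ... ≥ d_k ≥ 0 be real delays. Let A be an m × k binary matrix, and let i, i' ∈ {1,...,m} and j ∈ {1,...,k} satisfy a_{i,j} = 0, a_{i',j} = 1, and dl_A(i) ≥ d_j. Let A' be the matrix obtained from A by setting a'_{i,j} = 1 and a'_{i',j} = 0 and leaving all other entries unchanged. Then D_T(A') ≤ D_T(A), and every column of A' has the same number of 1-entries as the corresponding column of A. -/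
lemma fold_max_mono {k : ℕ} (d : Fin k → ℝ) {S T : Finset (Fin k)} (h : S ⊆ T) :
    S.fold max 0 d ≤ T.fold max 0 d := by
  rw [Finset.fold_max_le]
  exact ⟨(Finset.le_fold_max _).2 (Or.inl le_rfl),
    fun x hx => (Finset.le_fold_max _).2 (Or.inr ⟨x, h hx, le_rfl⟩)⟩

/-- moving a 1-entry of column `j` from row `i'` to row `i`, where the
current delay of row `i` is already at least `d j`, does not increase the total
delay and preserves all column weights. -/
theorem stmt8 (m k : ℕ) (hm : 1 ≤ m) (hk : 1 ≤ k)
    (d : Fin k → ℝ) (hd0 : ∀ j, 0 ≤ d j) (hdanti : Antitone d)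
    (A : Fin m → Fin k → Bool) (i i' : Fin m) (j : Fin k)
    (h0 : A i j = false) (h1 : A i' j = true) (hdl : d j ≤ rowDelay d A i)
    (A' : Fin m → Fin k → Bool)
    (hA' : ∀ i'' j'', A' i'' j'' =
      if i'' = i ∧ j'' = j then true
      else if i'' = i' ∧ j'' = j then false
      else A i'' j'') :
    totalDelay d A' ≤ totalDelay d A ∧ ∀ j'', colWeight A' j'' = colWeight A j'' := by
  have hii' : i ≠ i' := by
    rintro rfl
    rw [h0] at h1
    simp at h1
  constructor
  · apply Finset.sum_le_sum
    intro r _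
    by_cases hri : r = i
    · rw [hri]
      have hset : Finset.univ.filter (fun j'' => A' i j'' = true)
          = insert j (Finset.univ.filter (fun j'' => A i j'' = true)) := by
        ext x
        simp only [Finset.mem_filter, Finset.mem_insert, Finset.mem_univ, true_and, hA']
        rcases eq_or_ne x j with rfl | hx
        · simp [hii']
        · simp [hx]
      rw [rowDelay, hset, Finset.fold_insert_idem]
      rw [rowDelay] at hdl ⊢
      exact max_le hdl le_rfl
    · by_cases hri' : r = i'
      · rw [hri']
        have hset : Finset.univ.filter (fun j'' => A' i' j'' = true)
            = (Finset.univ.filter (fun j'' => A i' j'' = true)).erase j := by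
          ext x
          simp only [Finset.mem_filter, Finset.mem_erase, Finset.mem_univ, true_and, hA']
          rcases eq_or_ne x j with rfl | hx
          · simp [Ne.symm hii']
          · simp [hx]
        rw [rowDelay, rowDelay, hset]
        exact fold_max_mono d (Finset.erase_subset _ _)
      · have hset : Finset.univ.filter (fun j'' => A' r j'' = true)
            = Finset.univ.filter (fun j'' => A r j'' = true) := by
          ext x
          simp [hA', hri, hri']
        rw [rowDelay, rowDelay, hset]
  · intro j''
    by_cases hj : j'' = j
    · subst hj
      have hset : Finset.univ.filter (fun x => A' x j'' = true)
          = insert i ((Finset.univ.filter (fun x => A x j'' = true)).erase i') := by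
        ext x
        simp only [Finset.mem_filter, Finset.mem_insert, Finset.mem_erase, Finset.mem_univ,
          true_and, hA']
        rcases eq_or_ne x i with rfl | hx
        · simp [hii']
        · rcases eq_or_ne x i' with rfl | hx'
          · simp [hx, Ne.symm hii']
          · simp [hx, hx']
      have hi'mem : i' ∈ Finset.univ.filter (fun x => A x j'' = true) := by
        simp [h1]
      have hinot : i ∉ (Finset.univ.filter (fun x => A x j'' = true)).erase i' := by
        simp [h0]
      rw [colWeight, colWeight, hset, Finset.card_insert_of_notMem hinot,
        Finset.card_erase_of_mem hi'mem]
      have : 0 < (Finset.univ.filter (fun x => A x j'' = true)).card :=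
        Finset.card_pos.2 ⟨i', hi'mem⟩
      omega
    · have hset : Finset.univ.filter (fun x => A' x j'' = true)
          = Finset.univ.filter (fun x => A x j'' = true) := by
        ext x
        simp [hA', hj]
      rw [colWeight, colWeight, hset]
end

section
/- Let F_q be a finite field with q ≥ k, let n, m, k ≥ 1, let H_1, ..., H_k ⊆ {1,...,n}, and let A = (a_{h,j}) be an m × k binary matrix such that for every j ∈ {1,...,k}, the number of 1-entries in column j of A is at least n − |H_j|. Then there exist vectors p_1, ..., p_m ∈ F_q^n such that for every j ∈ {1,...,k}, the set {e_i : i ∈ H_j} ∪ {p_h : a_{h,j} = 1} spans F_q^n, where e_1,...,e_n is the standard basis of F_q^n. -/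
open Module Submodule



lemma avoid {F V : Type*} [Field F] [Fintype F] [AddCommGroup V] [Module F V]
    [Fintype V] {ι : Type*} (s : Finset ι) (W : ι → Submodule F V)
    (hW : ∀ j ∈ s, W j ≠ ⊤) (hpos : 0 < finrank F V)
    (hcard : s.card ≤ Fintype.card F) :
    ∃ v : V, ∀ j ∈ s, v ∉ W j := by
  classical
  set q := Fintype.card F with hq
  have hq2 : 2 ≤ q := Fintype.one_lt_card
  set n := finrank F V with hn
  have hVcard : Fintype.card V = q ^ n := card_eq_pow_finrank
  set B : Finset V := insert 0 (s.biUnion (fun j => ((W j : Set V).toFinset.erase 0)))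
    with hB
  have hWcard : ∀ j ∈ s, ((W j : Set V).toFinset.erase 0).card ≤ q ^ (n-1) - 1 := by
    intro j hj
    have h1 : (W j : Set V).toFinset.card = q ^ finrank F (W j) := by
      rw [Set.toFinset_card]
      exact card_eq_pow_finrank
    have h2 : finrank F (W j) < n := Submodule.finrank_lt (hW j hj)
    have h3 : (0:V) ∈ (W j : Set V).toFinset := by simp
    rw [Finset.card_erase_of_mem h3, h1]
    have : q ^ finrank F (W j) ≤ q ^ (n-1) :=
      Nat.pow_le_pow_right (by omega) (by omega)
    omega
  have hBcard : B.card < Fintype.card V := by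
    have h1 : B.card ≤ 1 + ∑ j ∈ s, ((W j : Set V).toFinset.erase 0).card := by
      have ha := Finset.card_insert_le (0:V) (s.biUnion (fun j => ((W j : Set V).toFinset.erase 0)))
      have hb := Finset.card_biUnion_le (s := s)
        (t := fun j => ((W j : Set V).toFinset.erase 0))
      rw [← hB] at ha
      omega
    have h2 : ∑ j ∈ s, ((W j : Set V).toFinset.erase 0).card ≤ s.card * (q ^ (n-1) - 1) := by
      calc ∑ j ∈ s, ((W j : Set V).toFinset.erase 0).card
          ≤ ∑ _j ∈ s, (q ^ (n-1) - 1) := Finset.sum_le_sum hWcard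
        _ = s.card * (q ^ (n-1) - 1) := by rw [Finset.sum_const, smul_eq_mul]
    have h3 : q ^ n = q ^ (n-1) * q := by
      rw [← pow_succ]; congr 1; omega
    have h4 : 1 ≤ q ^ (n-1) := Nat.one_le_pow _ _ (by omega)
    have h5 : s.card * (q ^ (n-1) - 1) ≤ q * (q ^ (n-1) - 1) :=
      Nat.mul_le_mul_right _ hcard
    have h6 : q * (q ^ (n-1) - 1) + q = q * q ^ (n-1) := by
      conv_rhs => rw [← Nat.sub_add_cancel h4]
      ring
    rw [hVcard]
    have h7 : q ^ n = q * q ^ (n-1) := by rw [← pow_succ']; congr 1; omega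
    linarith
  have hne : B ≠ Finset.univ := (Finset.card_lt_iff_ne_univ B).1 hBcard
  have hex : ∃ v : V, v ∉ B := by
    by_contra hcon
    push_neg at hcon
    exact hne (Finset.eq_univ_iff_forall.2 hcon)
  obtain ⟨v, hv⟩ := hex
  refine ⟨v, fun j hj hvj => hv ?_⟩
  by_cases h0 : v = 0
  · simp [hB, h0]
  · exact Finset.mem_insert_of_mem (Finset.mem_biUnion.2 ⟨j, hj,
      Finset.mem_erase.2 ⟨h0, by simpa using hvj⟩⟩)

lemma key {F V : Type*} [Field F] [Fintype F] [AddCommGroup V] [Module F V]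
    [Fintype V] [FiniteDimensional F V] (hpos : 0 < finrank F V) {k : ℕ}
    (hq : k ≤ Fintype.card F) :
    ∀ (m : ℕ) (A : Fin m → Fin k → Bool) (W : Fin k → Submodule F V),
    (∀ j, finrank F V ≤ finrank F (W j) + colWeight A j) →
    ∃ p : Fin m → V, ∀ j, W j ⊔ Submodule.span F (p '' {h | A h j = true}) = ⊤ := by
  intro m
  induction m with
  | zero =>
    intro A W hW
    refine ⟨fun h => 0, fun j => ?_⟩
    have : colWeight A j = 0 := by simp [colWeight]
    have h1 : W j = ⊤ := Submodule.eq_top_of_finrank_eq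
      (le_antisymm (Submodule.finrank_le _) (by have := hW j; omega))
    simp [h1]
  | succ m ih =>
    intro A W hW
    classical
    set s : Finset (Fin k) := Finset.univ.filter (fun j => A 0 j = true ∧ W j ≠ ⊤) with hs
    obtain ⟨v, hv⟩ := avoid s W (fun j hj => (Finset.mem_filter.1 hj).2.2) hpos
      (le_trans (Finset.card_le_card (Finset.filter_subset _ _)) (by simpa using hq))
    set W' : Fin k → Submodule F V :=
      fun j => if A 0 j = true then W j ⊔ Submodule.span F {v} else W j with hW'
    set A' : Fin m → Fin k → Bool := fun h j => A h.succ j with hA'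
    have hcw : ∀ j, colWeight A j = (if A 0 j = true then 1 else 0) + colWeight A' j := by
      intro j
      simp only [colWeight, Finset.card_filter]
      rw [Fin.sum_univ_succ]
    have hcond : ∀ j, finrank F V ≤ finrank F (W' j) + colWeight A' j := by
      intro j
      by_cases h0 : A 0 j = true
      · by_cases htop : W j = ⊤
        · have htop' : W' j = ⊤ := by simp [hW', h0, htop]
          rw [htop', finrank_top]
          omega
        · have hvj : v ∉ W j := hv j (by simp [hs, h0, htop])
          have hlt : W j < W' j := by
            simp only [hW', h0, if_true]
            refine lt_of_le_of_ne le_sup_left (fun heq => hvj ?_)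
            rw [heq]
            exact Submodule.mem_sup_right (Submodule.mem_span_singleton_self v)
          have := Submodule.finrank_lt_finrank_of_lt hlt
          have := hW j
          rw [hcw j, if_pos h0] at this
          omega
      · have : W' j = W j := by simp [hW', h0]
        rw [this]
        have := hW j
        rw [hcw j, if_neg h0] at this
        omega
    obtain ⟨p', hp'⟩ := ih A' W' hcond
    refine ⟨Fin.cons v p', fun j => ?_⟩
    rw [eq_top_iff, ← hp' j]
    refine sup_le ?_ ?_
    · by_cases h0 : A 0 j = true
      · simp only [hW', h0, if_true]
        refine sup_le le_sup_left ?_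
        refine le_trans ?_ le_sup_right
        apply Submodule.span_mono
        rintro x rfl
        exact ⟨0, h0, rfl⟩
      · simp only [hW', h0, if_false]
        exact le_sup_left
    · refine le_trans ?_ le_sup_right
      apply Submodule.span_mono
      rintro x ⟨h, hh, rfl⟩
      exact ⟨h.succ, hh, rfl⟩

/-- sufficiency in the feasibility criterion, over a field of size
`q ≥ k`: if column `j` of the assignment matrix has at least `n - |H j|` ones for
every client `j`, then there exist broadcast coefficient vectors
`p 1, …, p m ∈ F^n` such that for every `j` the unit vectors indexed by `H j`
together with the designated broadcast vectors span `F^n`. -/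
theorem stmt12 (F : Type*) [Field F] [Fintype F] (n m k : ℕ)
    (hn : 1 ≤ n) (hm : 1 ≤ m) (hk : 1 ≤ k) (hq : k ≤ Fintype.card F)
    (H : Fin k → Finset (Fin n)) (A : Fin m → Fin k → Bool)
    (hA : ∀ j : Fin k, n - (H j).card ≤ colWeight A j) :
    ∃ p : Fin m → (Fin n → F), ∀ j : Fin k,
      Submodule.span F
        ((fun i : Fin n => (Pi.single i 1 : Fin n → F)) '' (H j : Set (Fin n))
          ∪ p '' {h : Fin m | A h j = true}) = ⊤ := by
  classical
  set e : Fin n → (Fin n → F) := fun i => (Pi.single i 1 : Fin n → F) with he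
  have hbe : ⇑(Pi.basisFun F (Fin n)) = e := by
    funext i
    rw [he, Pi.basisFun_apply]
  have hli : LinearIndependent F e := hbe ▸ (Pi.basisFun F (Fin n)).linearIndependent
  set W : Fin k → Submodule F (Fin n → F) :=
    fun j => Submodule.span F (e '' (H j : Set (Fin n))) with hWdef
  have hrank : ∀ j, finrank F (W j) = (H j).card := by
    intro j
    have hli' : LinearIndependent F (fun x : (H j : Set (Fin n)) => e x) :=
      hli.comp _ Subtype.val_injective
    have himg : e '' ((H j : Set (Fin n))) = ((H j).image e : Set (Fin n → F)) :=
      (Finset.coe_image).symm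
    rw [hWdef]
    simp only [himg]
    rw [finrank_span_set_eq_card (himg ▸ (LinearIndepOn.id_image (R := F) (v := e) (s := (H j : Set (Fin n))) hli' : LinearIndependent F (fun x : e '' (H j : Set (Fin n)) => (x : Fin n → F))))]
    rw [Set.toFinset_image, Finset.toFinset_coe, Finset.card_image_of_injective _ hli.injective]
  have hcond : ∀ j, finrank F (Fin n → F) ≤ finrank F (W j) + colWeight A j := by
    intro j
    rw [Module.finrank_fin_fun, hrank j]
    have h1 : (H j).card ≤ n := by
      have := Finset.card_le_univ (H j)
      simpa using this
    have := hA j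
    omega
  obtain ⟨p, hp⟩ := key (V := Fin n → F) (by rw [Module.finrank_fin_fun]; omega) hq m A W hcond
  refine ⟨p, fun j => ?_⟩
  rw [Submodule.span_union]
  exact hp j
end
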